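/- For every countable set S and every partial order ≤_S on S, there exist families (ℒ_s)_{s∈S} and (𝒦_s)_{s∈S} of sets of languages over the alphabet {1,2} such that for all s,t ∈ S: (1) ML⁺(𝒦_s) ≤_expr ML⁺(𝒦_t) if and only if ML⁺(ℒ_s) ≤_poly ML⁺(ℒ_t) if and only if s ≤_S t; (2) all logics ML⁺(ℒ_s) are equally expressive, and if s ≰_S t then ML⁺(ℒ_s) is exponentially more succinct than ML⁺(ℒ_t). -/

import Mathlib

set_option autoImplicit false
attribute [local instance] Classical.propDecidable

/-- A Kripke model with `n` modalities: a nonempty set of worlds, `n` accessibility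
relations, and a propositional assignment (variables are indexed by `ℕ`). -/
structure KripkeModel (n : ℕ) : Type 1 where
  W : Type
  nonempty : Nonempty W
  R : Fin n → W → W → Prop
  val : ℕ → Set W

/-- A pointed Kripke model. -/
structure PointedModel (n : ℕ) : Type 1 where
  M : KripkeModel n
  w : M.W

/-- Successor selection functions of arity `n`. -/
def SSF (n : ℕ) : Type 1 :=
  (M : KripkeModel n) → M.W → Set M.W

/-- Formulas of the modal logic `ML⁺(𝒪)` for a set `𝒪` of successor selection functions. -/
inductive MLFormula {n : ℕ} (Os : Set (SSF n)) : Type 1 where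
  | var : ℕ → MLFormula Os
  | neg : MLFormula Os → MLFormula Os
  | or : MLFormula Os → MLFormula Os → MLFormula Os
  | box : Os → MLFormula Os → MLFormula Os

/-- Size of a formula: number of nodes of its syntax tree. -/
def MLFormula.size {n : ℕ} {Os : Set (SSF n)} : MLFormula Os → ℕ
  | .var _ => 1
  | .neg φ => φ.size + 1
  | .or φ ψ => φ.size + ψ.size + 1
  | .box _ φ => φ.size + 1

/-- Satisfaction of an `ML⁺(𝒪)` formula in a pointed model. -/
def Satisfies {n : ℕ} {Os : Set (SSF n)} (M : KripkeModel n) : M.W → MLFormula Os → Prop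
  | w, .var p => w ∈ M.val p
  | w, .neg φ => ¬ Satisfies M w φ
  | w, .or φ ψ => Satisfies M w φ ∨ Satisfies M w ψ
  | w, .box O φ => ∀ w' ∈ O.val M w, Satisfies M w' φ

/-- Two formulas (of possibly different logics) are equivalent if they are satisfied
by exactly the same pointed models. -/
def FEquiv {n : ℕ} {Os₁ Os₂ : Set (SSF n)} (φ : MLFormula Os₁) (ψ : MLFormula Os₂) : Prop :=
  ∀ (M : KripkeModel n) (w : M.W), Satisfies M w φ ↔ Satisfies M w ψ

/-- `ML⁺(𝒪₂)` is at least as expressive as `ML⁺(𝒪₁)`. -/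
def LeExpr {n : ℕ} (Os₁ Os₂ : Set (SSF n)) : Prop :=
  ∀ φ : MLFormula Os₁, ∃ ψ : MLFormula Os₂, FEquiv φ ψ

/-- `ML⁺(𝒪₂)` is at least as succinct as `ML⁺(𝒪₁)`: there is a fixed polynomial `p` such
that every `ML⁺(𝒪₁)`-formula has an equivalent `ML⁺(𝒪₂)`-formula of polynomially bounded size. -/
def LePoly {n : ℕ} (Os₁ Os₂ : Set (SSF n)) : Prop :=
  ∃ p : Polynomial ℕ, ∀ φ : MLFormula Os₁, ∃ ψ : MLFormula Os₂,
    FEquiv φ ψ ∧ ψ.size ≤ p.eval φ.size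

def EquallyExpressive {n : ℕ} (Os₁ Os₂ : Set (SSF n)) : Prop :=
  LeExpr Os₁ Os₂ ∧ LeExpr Os₂ Os₁

/-- `ML⁺(𝒪₁)` is exponentially more succinct than `ML⁺(𝒪₂)`: there is a sequence of
`ML⁺(𝒪₁)`-formulas of linearly bounded size and some `c > 1` such that every equivalent
`ML⁺(𝒪₂)`-formula of the `i`-th formula has size at least `c ^ i`. -/
def ExpMoreSuccinct {n : ℕ} (Os₁ Os₂ : Set (SSF n)) : Prop :=
  ∃ (φ : ℕ → MLFormula Os₁) (a b : ℕ) (c : ℝ), 1 < c ∧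
    (∀ i : ℕ, (φ i).size ≤ a * i + b) ∧
    ∀ (i : ℕ) (ψ : MLFormula Os₂), FEquiv (φ i) ψ → c ^ i ≤ ((ψ.size : ℕ) : ℝ)

/-- The successor selection function given by an `n`-ary Boolean function `f`:
it selects the `f`-successors. -/
noncomputable def OfBool {n : ℕ} (f : (Fin n → Bool) → Bool) : SSF n :=
  fun M w => {w' | f (fun j => decide (M.R j w w')) = true}

/-- The set of successor selection functions given by a set of `n`-ary Boolean functions. -/
def boolSSFs {n : ℕ} (F : Set ((Fin n → Bool) → Bool)) : Set (SSF n) :=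
  OfBool '' F

/-- `sSucc M s w w'` : `w'` is an `s`-successor of `w` in `M`. -/
def sSucc {n : ℕ} (M : KripkeModel n) : List (Fin n) → M.W → M.W → Prop
  | [], w, w' => w' = w
  | a :: s, w, w' => ∃ u, M.R a w u ∧ sSucc M s u w'

/-- The successor selection function given by a language `L`: it selects all
`s`-successors for words `s ∈ L`. -/
def OfLang {n : ℕ} (L : Set (List (Fin n))) : SSF n :=
  fun M w => {w' | ∃ s ∈ L, sSucc M s w w'}

/-- The set of successor selection functions given by a set of languages. -/
def langSSFs {n : ℕ} (Ls : Set (Set (List (Fin n)))) : Set (SSF n) :=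
  OfLang '' Ls

/-- The operators of standard multimodal logic `ML_n`: the singleton one-letter languages. -/
def MLn_ops (n : ℕ) : Set (SSF n) := {O | ∃ j : Fin n, O = OfLang {[j]}}

/-- `nestBoxes s φ` is the formula `□_{s₁}□_{s₂}…□_{s_k} φ`. -/
def nestBoxes {n : ℕ} : List (Fin n) → MLFormula (MLn_ops n) → MLFormula (MLn_ops n)
  | [], φ => φ
  | j :: s, φ => .box ⟨OfLang {[j]}, ⟨j, rfl⟩⟩ (nestBoxes s φ)

/-! ### Alternation languages (alphabet {1,2} represented as `Fin 2`, letter `0` ↦ 1, `1` ↦ 2) -/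

/-- The (0-based) `j`-th letter of the alternating word starting with letter `b`. -/
def altLetter (b : Fin 2) (j : ℕ) : Fin 2 := if j % 2 = 0 then b else b + 1

/-- The alternating word of length `ℓ` starting with letter `b`. -/
def altWord (b : Fin 2) (ℓ : ℕ) : List (Fin 2) := (List.range ℓ).map (altLetter b)

/-- The alternation language `A_ℓ` of length `ℓ`. -/
def altLang (ℓ : ℕ) : Set (List (Fin 2)) := {altWord 0 ℓ, altWord 1 ℓ}

/-- Operators of the logic `ML_A(I)`. -/
def MLA_ops (I : Set ℕ) : Set (SSF 2) := (fun ℓ => OfLang (altLang ℓ)) '' I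

/-- Operators of the logic `ML_A⁺(I)` (alternation operators plus the classical boxes). -/
def MLAp_ops (I : Set ℕ) : Set (SSF 2) :=
  MLA_ops I ∪ {OfLang {[(0 : Fin 2)]}, OfLang {[(1 : Fin 2)]}}

/-- The formula `[A_ℓ]^i p` (where `p` is the fixed propositional variable `0`),
as a formula of `ML_A({ℓ})`. -/
def boxAltIter (ℓ : ℕ) : ℕ → MLFormula (MLA_ops {ℓ})
  | 0 => .var 0
  | i + 1 => .box ⟨OfLang (altLang ℓ), ⟨ℓ, rfl, rfl⟩⟩ (boxAltIter ℓ i)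

/-! ### Formula size games -/

/-- The class `{(M,w') | (M,w) ∈ C, w' ∈ O(M,w)}` used in the box move. -/
def boxImage {n : ℕ} (O : SSF n) (C : Set (PointedModel n)) : Set (PointedModel n) :=
  {q | ∃ m ∈ C, ∃ w' ∈ O m.M m.w, q = ⟨m.M, w'⟩}

/-- Closed game trees of the formula size game `FSG(𝒪)`, with root label `⟨C∘D⟩`.
Each constructor corresponds to a legal Spoiler move; leaves are atomic moves. -/
inductive GameTree {n : ℕ} (Os : Set (SSF n)) :
    Set (PointedModel n) → Set (PointedModel n) → Type 1 where
  | atom (p : ℕ) (C D : Set (PointedModel n))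
      (hC : ∀ q ∈ C, q.w ∈ q.M.val p) (hD : ∀ q ∈ D, q.w ∉ q.M.val p) :
      GameTree Os C D
  | not (C D : Set (PointedModel n)) (t : GameTree Os D C) : GameTree Os C D
  | or (C₁ C₂ D : Set (PointedModel n))
      (t₁ : GameTree Os C₁ D) (t₂ : GameTree Os C₂ D) : GameTree Os (C₁ ∪ C₂) D
  | box (O : SSF n) (hO : O ∈ Os) (C D D₁ : Set (PointedModel n))
      (hD : ∀ q ∈ D, ∃ w' ∈ O q.M q.w, (⟨q.M, w'⟩ : PointedModel n) ∈ D₁)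
      (t : GameTree Os (boxImage O C) D₁) : GameTree Os C D

/-- Number of nodes of a game tree. -/
def gameTreeSize {n : ℕ} {Os : Set (SSF n)} :
    ∀ (C D : Set (PointedModel n)), GameTree Os C D → ℕ
  | _, _, .atom _ _ _ _ _ => 1
  | _, _, .not _ _ t => gameTreeSize _ _ t + 1
  | _, _, .or _ _ _ t₁ t₂ => gameTreeSize _ _ t₁ + gameTreeSize _ _ t₂ + 1
  | _, _, .box _ _ _ _ _ _ t => gameTreeSize _ _ t + 1

/-- `IsSubtree t T bl par` : the root of `t` is a node of `T`; `bl` is the sequence of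
successor selection functions labelling box moves on the path from `T`'s root to this node
(excluding the node's own label), and `par = true` iff the path contains an even number
of `¬`-labels. -/
inductive IsSubtree {n : ℕ} {Os : Set (SSF n)} :
    ∀ {C D A B : Set (PointedModel n)},
      GameTree Os C D → GameTree Os A B → List (SSF n) → Bool → Prop where
  | refl {A B : Set (PointedModel n)} (t : GameTree Os A B) : IsSubtree t t [] true
  | not {C D A B : Set (PointedModel n)} {bl : List (SSF n)} {par : Bool}
      {t : GameTree Os C D} {t' : GameTree Os B A} :
      IsSubtree t t' bl par → IsSubtree t (.not A B t') bl (!par)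
  | orLeft {C D A₁ A₂ B : Set (PointedModel n)} {bl : List (SSF n)} {par : Bool}
      {t : GameTree Os C D} {t₁ : GameTree Os A₁ B} (t₂ : GameTree Os A₂ B) :
      IsSubtree t t₁ bl par → IsSubtree t (.or A₁ A₂ B t₁ t₂) bl par
  | orRight {C D A₁ A₂ B : Set (PointedModel n)} {bl : List (SSF n)} {par : Bool}
      {t : GameTree Os C D} (t₁ : GameTree Os A₁ B) {t₂ : GameTree Os A₂ B} :
      IsSubtree t t₂ bl par → IsSubtree t (.or A₁ A₂ B t₁ t₂) bl par
  | box {C D A B D₁ : Set (PointedModel n)} {bl : List (SSF n)} {par : Bool}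
      {t : GameTree Os C D} (O : SSF n) (hO : O ∈ Os)
      (hD : ∀ q ∈ B, ∃ w' ∈ O q.M q.w, (⟨q.M, w'⟩ : PointedModel n) ∈ D₁)
      {t' : GameTree Os (boxImage O A) D₁} :
      IsSubtree t t' bl par → IsSubtree t (.box O hO A B D₁ hD t') (O :: bl) par

/-! ### The canonical game tree `T^ψ` corresponding to a formula `ψ` -/

/-- Positions (nodes) in the syntax tree of a formula. -/
inductive FPos {n : ℕ} {Os : Set (SSF n)} : MLFormula Os → Type 1 where
  | root (φ : MLFormula Os) : FPos φ
  | negChild {φ : MLFormula Os} : FPos φ → FPos (.neg φ)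
  | orLeft {φ ψ : MLFormula Os} : FPos φ → FPos (.or φ ψ)
  | orRight {φ ψ : MLFormula Os} : FPos ψ → FPos (.or φ ψ)
  | boxChild {O : Os} {φ : MLFormula Os} : FPos φ → FPos (.box O φ)

/-- `nodeData φ v C D` computes, for the node `v` of the closed game tree `T^φ(⟨C∘D⟩)`
obtained by playing the Spoiler strategy corresponding to `φ` on the starting node
`⟨C∘D⟩`, the tuple (left label class, right label class, boxlabels, parity of ¬'s). -/
def nodeData {n : ℕ} {Os : Set (SSF n)} :
    (φ : MLFormula Os) → FPos φ →
      Set (PointedModel n) → Set (PointedModel n) →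
      Set (PointedModel n) × Set (PointedModel n) × List (SSF n) × Bool
  | _, .root _, C, D => (C, D, [], true)
  | .neg φ, .negChild q, C, D =>
      let r := nodeData φ q D C
      (r.1, r.2.1, r.2.2.1, !r.2.2.2)
  | .or φ₁ _, .orLeft q, C, D =>
      nodeData φ₁ q {m ∈ C | Satisfies m.M m.w φ₁} D
  | .or _ φ₂, .orRight q, C, D =>
      nodeData φ₂ q {m ∈ C | Satisfies m.M m.w φ₂} D
  | .box O φ, .boxChild q, C, D =>
      let r := nodeData φ q (boxImage O.val C)
        {m ∈ boxImage O.val D | ¬ Satisfies m.M m.w φ}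
      (r.1, r.2.1, O.val :: r.2.2.1, r.2.2.2)

/-- A position is a leaf of the game tree iff the corresponding subformula is a variable. -/
def isLeafPos {n : ℕ} {Os : Set (SSF n)} : (φ : MLFormula Os) → FPos φ → Prop
  | .var _, .root _ => True
  | .neg _, .root _ => False
  | .or _ _, .root _ => False
  | .box _ _, .root _ => False
  | .neg φ, .negChild q => isLeafPos φ q
  | .or φ _, .orLeft q => isLeafPos φ q
  | .or _ ψ, .orRight q => isLeafPos ψ q
  | .box _ φ, .boxChild q => isLeafPos φ q

/-! ### The models `A*_{ℓ,i}` and `B*_{ℓ,s}` -/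

/-- Extend a string `s ∈ {1,2}^i` to an infinite string (only the first `i` letters matter). -/
def extendStr {i : ℕ} (s : Fin i → Fin 2) : ℕ → Fin 2 :=
  fun d => if h : d < i then s ⟨d, h⟩ else 0

/-- The (0-based) `d`-th letter of the concatenation `a_ℓ^{s 0} a_ℓ^{s 1} …`. -/
def bLetter (ℓ : ℕ) (s : ℕ → Fin 2) (d : ℕ) : Fin 2 :=
  altLetter (s (d / ℓ)) (d % ℓ)

/-- The extended model `B*_{ℓ,s}`: a path of length `i·ℓ` spelling `a^ℓ_s`, a trap world
(`none`) with a 1-loop and a 2-loop where `p` (variable 0) is true, and `j`-edges to the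
trap from every base world lacking a `j`-successor. -/
def Bstar (ℓ i : ℕ) (s : ℕ → Fin 2) : KripkeModel 2 where
  W := Option (Fin (i * ℓ + 1))
  nonempty := ⟨none⟩
  R := fun j x y =>
    match x, y with
    | none, none => True
    | none, some _ => False
    | some d, some d' => (d' : ℕ) = (d : ℕ) + 1 ∧ bLetter ℓ s (d : ℕ) = j
    | some d, none => ¬ (((d : ℕ) < i * ℓ) ∧ bLetter ℓ s (d : ℕ) = j)
  val := fun p => {x | p = 0 ∧ x = none}

/-- The root `w₀^B` of `B*_{ℓ,s}`. -/
def rootB (ℓ i : ℕ) (s : ℕ → Fin 2) : (Bstar ℓ i s).W :=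
  some ⟨0, Nat.succ_pos _⟩

/-- Base worlds of `A*_{ℓ,i}`: a depth `d ≤ i·ℓ` together with the branch (which of the
two alternating words the current segment follows); the branch is normalized to `0` at
the main worlds (depths that are multiples of `ℓ`). -/
def AstarBase (ℓ i : ℕ) : Type :=
  {x : ℕ × Fin 2 // x.1 ≤ i * ℓ ∧ (x.1 % ℓ = 0 → x.2 = 0)}

/-- Edges of the base model `A-base_{ℓ,i}` with label `j`. -/
def AbaseEdge (ℓ : ℕ) (j : Fin 2) (x y : ℕ × Fin 2) : Prop :=
  y.1 = x.1 + 1 ∧ ∃ c : Fin 2, j = altLetter c (x.1 % ℓ) ∧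
    (x.1 % ℓ ≠ 0 → c = x.2) ∧ (y.1 % ℓ ≠ 0 → c = y.2)

/-- The extended model `A*_{ℓ,i}`: between consecutive main worlds there are two disjoint
paths spelling `a_ℓ^1` and `a_ℓ^2`; a trap world (`none`) with a 1-loop and a 2-loop where
`p` is false; `j`-edges to the trap from every base world lacking a `j`-successor.
The variable `p` (variable 0) is true exactly at the final main world `w_i`. -/
def Astar (ℓ i : ℕ) : KripkeModel 2 where
  W := Option (AstarBase ℓ i)
  nonempty := ⟨none⟩
  R := fun j x y =>
    match x, y with
    | none, none => True
    | none, some _ => False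
    | some a, some b => AbaseEdge ℓ j a.val b.val
    | some a, none => ¬ ∃ b : AstarBase ℓ i, AbaseEdge ℓ j a.val b.val
  val := fun p => {x | p = 0 ∧ x = some ⟨(i * ℓ, 0), le_refl _, fun _ => rfl⟩}

/-- The root `w₀^A` of `A*_{ℓ,i}`. -/
def rootA (ℓ i : ℕ) : (Astar ℓ i).W :=
  some ⟨(0, 0), Nat.zero_le _, fun _ => rfl⟩

/-- The class `𝔸_{ℓ,i}`. -/
def classA (ℓ i : ℕ) : Set (PointedModel 2) :=
  {⟨Astar ℓ i, rootA ℓ i⟩}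

/-- The class `𝔹_{ℓ,i}`. -/
def classB (ℓ i : ℕ) : Set (PointedModel 2) :=
  {q | ∃ s : Fin i → Fin 2, q = ⟨Bstar ℓ i (extendStr s), rootB ℓ i (extendStr s)⟩}

/-- A node with label classes `C`, `D` covers the string `s` if one of the classes
contains a pointed model `(B*_{ℓ,s}, w)`. -/
def Covers (ℓ i : ℕ) (C D : Set (PointedModel 2)) (s : Fin i → Fin 2) : Prop :=
  ∃ w : (Bstar ℓ i (extendStr s)).W,
    (⟨Bstar ℓ i (extendStr s), w⟩ : PointedModel 2) ∈ C ∪ D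

/-- The word `a^ℓ_s = a_ℓ^{s₁} a_ℓ^{s₂} … a_ℓ^{s_i}`. -/
def aWord (ℓ : ℕ) {i : ℕ} (s : Fin i → Fin 2) : List (Fin 2) :=
  (List.ofFn fun j => altWord (s j) ℓ).flatten

/-- A language is length-uniform if it is nonempty and all its words have the same length. -/
def LengthUniform (L : Set (List (Fin 2))) : Prop :=
  L.Nonempty ∧ ∃ d : ℕ, ∀ x ∈ L, x.length = d

/-- `‖L‖`: the common word length of a length-uniform language. -/
noncomputable def luLen (L : Set (List (Fin 2))) : ℕ :=
  sInf {d : ℕ | ∃ x ∈ L, x.length = d}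

/-- Concatenation of languages. -/
def langConcat (L₁ L₂ : Set (List (Fin 2))) : Set (List (Fin 2)) :=
  {x | ∃ a ∈ L₁, ∃ b ∈ L₂, x = a ++ b}

/-- `L₁ ∘ L₂ ∘ … ∘ L_m` for a list of languages. -/
def concatList (Ls : List (Set (List (Fin 2)))) : Set (List (Fin 2)) :=
  Ls.foldr langConcat {([] : List (Fin 2))}

/-- `𝒪`-bisimulations. -/
def IsOBisim {n : ℕ} (Os : Set (SSF n)) (M₁ M₂ : KripkeModel n)
    (Z : M₁.W → M₂.W → Prop) : Prop :=
  ∀ w₁ w₂, Z w₁ w₂ →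
    (∀ p : ℕ, w₁ ∈ M₁.val p ↔ w₂ ∈ M₂.val p) ∧
    (∀ O ∈ Os, ∀ w₁' ∈ O M₁ w₁, ∃ w₂' ∈ O M₂ w₂, Z w₁' w₂') ∧
    (∀ O ∈ Os, ∀ w₂' ∈ O M₂ w₂, ∃ w₁' ∈ O M₁ w₁, Z w₁' w₂')

/-! ### auxiliary development -/

/-- The path model spelling the word `wd`, with valuation `V` for variable 0. -/
def pathModel (wd : List (Fin 2)) (V : Set ℕ) : KripkeModel 2 where
  W := ℕ
  nonempty := ⟨0⟩
  R := fun c a b => b = a + 1 ∧ wd[a]? = some c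
  val := fun p => {x | p = 0 ∧ x ∈ V}

lemma sSucc_path (wd : List (Fin 2)) (V : Set ℕ) (u : List (Fin 2)) :
    ∀ j w' : ℕ, sSucc (pathModel wd V) u j w' ↔ (u <+: wd.drop j ∧ w' = j + u.length) := by
  induction u with
  | nil => intro j w'; simp [sSucc]; exact Iff.rfl
  | cons c v ih =>
    intro j w'
    have hdec : (c :: v <+: wd.drop j) ↔ (wd[j]? = some c ∧ v <+: wd.drop (j+1)) := by
      by_cases hj : j < wd.length
      · rw [List.drop_eq_getElem_cons hj, List.cons_prefix_cons,
          List.getElem?_eq_getElem hj]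
        simp [eq_comm]
      · rw [List.drop_eq_nil_of_le (le_of_not_gt hj), List.getElem?_eq_none (le_of_not_gt hj)]
        simp
    constructor
    · rintro ⟨x, ⟨rfl, hc⟩, hs⟩
      rw [ih] at hs
      obtain ⟨hpre, rfl⟩ := hs
      exact ⟨hdec.2 ⟨hc, hpre⟩, by simp; omega⟩
    · rintro ⟨hpre, rfl⟩
      obtain ⟨hc, hpre'⟩ := hdec.1 hpre
      exact ⟨j + 1, ⟨rfl, hc⟩, (ih (j+1) _).2 ⟨hpre', by simp; omega⟩⟩

lemma mem_OfLang_path (u : List (Fin 2)) (wd : List (Fin 2)) (V : Set ℕ) (j w' : ℕ) :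
    w' ∈ OfLang {u} (pathModel wd V) j ↔ (u <+: wd.drop j ∧ w' = j + u.length) := by
  rw [show (w' ∈ OfLang {u} (pathModel wd V) j) ↔ ∃ s ∈ ({u} : Set (List (Fin 2))),
      sSucc (pathModel wd V) s j w' from Iff.rfl]
  simp only [Set.mem_singleton_iff, exists_eq_left]
  exact sSucc_path wd V u j w'

/-- Key invariant: if every factorization of the suffix `wd.drop j` into words of `U`
has more than `ψ.size` factors, then `ψ` cannot distinguish the two path models at `j`. -/
lemma invariant {Os : Set (SSF 2)} (U : Set (List (Fin 2)))
    (hOs : ∀ O ∈ Os, ∃ u ∈ U, O = OfLang {u}) (wd : List (Fin 2)) :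
    ∀ (ψ : MLFormula Os) (j : ℕ),
      (∀ ps : List (List (Fin 2)), (∀ u ∈ ps, u ∈ U) → ps.flatten = wd.drop j →
        ψ.size < ps.length) →
      (Satisfies (pathModel wd {wd.length}) j ψ ↔ Satisfies (pathModel wd ∅) j ψ) := by
  intro ψ
  induction ψ with
  | var p =>
    intro j h
    simp only [Satisfies]
    constructor
    · rintro ⟨rfl, hj⟩
      exfalso
      have hj' : j = wd.length := hj
      have := h [] (by simp) (by simp [hj', List.drop_length])
      simp at this
    · rintro ⟨-, hj⟩
      exact absurd hj (Set.notMem_empty _)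
  | neg φ ih =>
    intro j h
    simp only [Satisfies]
    rw [ih j (fun ps h1 h2 => Nat.lt_of_succ_lt (h ps h1 h2))]
  | or φ₁ φ₂ ih₁ ih₂ =>
    intro j h
    simp only [Satisfies]
    rw [ih₁ j (fun ps h1 h2 => by have := h ps h1 h2; simp [MLFormula.size] at this ⊢; omega),
      ih₂ j (fun ps h1 h2 => by have := h ps h1 h2; simp [MLFormula.size] at this ⊢; omega)]
  | box O φ ih =>
    intro j h
    obtain ⟨u, hu, hOu⟩ := hOs O.1 O.2
    simp only [Satisfies]
    have hmem : ∀ (V : Set ℕ) (w' : ℕ), w' ∈ O.1 (pathModel wd V) j ↔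
        (u <+: wd.drop j ∧ w' = j + u.length) := by
      intro V w'; rw [hOu]; exact mem_OfLang_path u wd V j w'
    by_cases hpre : u <+: wd.drop j
    · have hrest : u ++ wd.drop (j + u.length) = wd.drop j := by
        rw [← List.drop_drop]
        exact List.prefix_iff_eq_append.1 hpre
      have IH := ih (j + u.length) (by
        intro qs h1 h2
        have := h (u :: qs) (by
          intro x hx
          rcases List.mem_cons.1 hx with rfl | hx
          · exact hu
          · exact h1 x hx)
          (by simp only [List.flatten_cons, h2, hrest])
        simp only [MLFormula.size, List.length_cons] at this ⊢
        omega)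
      constructor
      · intro H w' hw'
        obtain ⟨-, rfl⟩ := (hmem ∅ w').1 hw'
        exact IH.1 (H _ ((hmem _ _).2 ⟨hpre, rfl⟩))
      · intro H w' hw'
        obtain ⟨-, rfl⟩ := (hmem _ w').1 hw'
        exact IH.2 (H _ ((hmem ∅ _).2 ⟨hpre, rfl⟩))
    · constructor <;> intro _ w' hw' <;> exact absurd ((hmem _ w').1 hw').1 hpre

/-- From a distinguishing formula, extract a short factorization. -/
lemma key_lower {Os : Set (SSF 2)} (U : Set (List (Fin 2)))
    (hOs : ∀ O ∈ Os, ∃ u ∈ U, O = OfLang {u}) (wd : List (Fin 2)) (ψ : MLFormula Os)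
    (h1 : Satisfies (pathModel wd {wd.length}) (0 : ℕ) ψ)
    (h2 : ¬ Satisfies (pathModel wd ∅) (0 : ℕ) ψ) :
    ∃ ps : List (List (Fin 2)), (∀ u ∈ ps, u ∈ U) ∧ ps.flatten = wd ∧ ps.length ≤ ψ.size := by
  by_contra hcon
  push_neg at hcon
  have := invariant U hOs wd ψ 0 (by
    intro ps hmem hfl
    have := hcon ps hmem (by simpa using hfl)
    omega)
  exact h2 (this.1 h1)

/-- The formula `[{wd}] p` distinguishes the two path models. -/
lemma sat_boxW {Os : Set (SSF 2)} (wd : List (Fin 2)) (h : OfLang {wd} ∈ Os) :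
    Satisfies (pathModel wd {wd.length}) (0 : ℕ)
      (MLFormula.box (⟨OfLang {wd}, h⟩ : Os) (MLFormula.var 0)) ∧
    ¬ Satisfies (pathModel wd ∅) (0 : ℕ)
      (MLFormula.box (⟨OfLang {wd}, h⟩ : Os) (MLFormula.var 0)) := by
  have hmem : ∀ (V : Set ℕ) (w' : ℕ), w' ∈ OfLang {wd} (pathModel wd V) (0 : ℕ) ↔
      w' = wd.length := by
    intro V w'
    rw [mem_OfLang_path]
    simp
  constructor
  · intro w' hw'
    exact ⟨rfl, (hmem _ w').1 hw'⟩
  · intro H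
    have := H wd.length ((hmem ∅ _).2 rfl)
    exact (Set.notMem_empty _) this.2

/-- Transport a formula along an inclusion of operator sets. -/
noncomputable def castFormula {n : ℕ} {Os₁ Os₂ : Set (SSF n)} (h : Os₁ ⊆ Os₂) :
    MLFormula Os₁ → MLFormula Os₂
  | .var p => .var p
  | .neg φ => .neg (castFormula h φ)
  | .or φ ψ => .or (castFormula h φ) (castFormula h ψ)
  | .box O φ => .box ⟨O.1, h O.2⟩ (castFormula h φ)

lemma castFormula_sat {n : ℕ} {Os₁ Os₂ : Set (SSF n)} (h : Os₁ ⊆ Os₂)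
    (φ : MLFormula Os₁) : FEquiv φ (castFormula h φ) := by
  induction φ with
  | var p => intro M w; rw [castFormula]; exact Iff.rfl
  | neg φ ih => intro M w; rw [castFormula]; simp only [Satisfies]; rw [ih M w]
  | or φ₁ φ₂ ih₁ ih₂ => intro M w; rw [castFormula]; simp only [Satisfies]; rw [ih₁ M w, ih₂ M w]
  | box O φ ih =>
    intro M w
    rw [castFormula]
    simp only [Satisfies]
    exact forall₂_congr fun w' _ => ih M w'

lemma castFormula_size {n : ℕ} {Os₁ Os₂ : Set (SSF n)} (h : Os₁ ⊆ Os₂)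
    (φ : MLFormula Os₁) : (castFormula h φ).size = φ.size := by
  induction φ with
  | var p => rw [castFormula]; exact rfl
  | neg φ ih => rw [castFormula]; simp [MLFormula.size, ih]
  | or φ₁ φ₂ ih₁ ih₂ => rw [castFormula]; simp [MLFormula.size, ih₁, ih₂]
  | box O φ ih => rw [castFormula]; simp [MLFormula.size, ih]

lemma leExpr_of_subset {n : ℕ} {Os₁ Os₂ : Set (SSF n)} (h : Os₁ ⊆ Os₂) :
    LeExpr Os₁ Os₂ :=
  fun φ => ⟨castFormula h φ, castFormula_sat h φ⟩

lemma lePoly_of_subset {n : ℕ} {Os₁ Os₂ : Set (SSF n)} (h : Os₁ ⊆ Os₂) :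
    LePoly Os₁ Os₂ :=
  ⟨Polynomial.X, fun φ => ⟨castFormula h φ, castFormula_sat h φ, by
    rw [castFormula_size, Polynomial.eval_X]⟩⟩

lemma mem_OfLang_single (M : KripkeModel 2) (w w' : M.W) :
    w' ∈ OfLang {[(0 : Fin 2)]} M w ↔ M.R 0 w w' := by
  constructor
  · rintro ⟨s, hs, hss⟩
    rw [Set.mem_singleton_iff] at hs
    subst hs
    obtain ⟨u, hR, hu⟩ := hss
    have : w' = u := hu
    subst this
    exact hR
  · intro hR
    exact ⟨[0], rfl, w', hR, rfl⟩

/-- Nested `[0]`-boxes. -/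
noncomputable def nest {Os : Set (SSF 2)} (h1 : OfLang {[(0 : Fin 2)]} ∈ Os) :
    ℕ → MLFormula Os → MLFormula Os
  | 0, φ => φ
  | d+1, φ => .box ⟨_, h1⟩ (nest h1 d φ)

lemma nest_sat {Os : Set (SSF 2)} (h1 : OfLang {[(0 : Fin 2)]} ∈ Os)
    (φ : MLFormula Os) (M : KripkeModel 2) :
    ∀ (d : ℕ) (w : M.W), Satisfies M w (nest h1 d φ) ↔
      ∀ w', sSucc M (List.replicate d 0) w w' → Satisfies M w' φ := by
  intro d
  induction d with
  | zero =>
    intro w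
    rw [nest]
    simp only [List.replicate_zero]
    constructor
    · intro h w' hw'
      have : w' = w := hw'
      subst this; exact h
    · intro h; exact h w rfl
  | succ d ih =>
    intro w
    rw [nest]
    show (∀ w' ∈ OfLang {[(0 : Fin 2)]} M w, Satisfies M w' (nest h1 d φ)) ↔ _
    rw [List.replicate_succ]
    constructor
    · rintro H w' ⟨x, hR, hs⟩
      exact (ih x).1 (H x ((mem_OfLang_single M w x).2 hR)) w' hs
    · intro H x hx
      rw [ih x]
      intro w' hw'
      exact H w' ⟨x, (mem_OfLang_single M w x).1 hx, hw'⟩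

/-! ### The families -/

def gExp (n k : ℕ) : ℕ := 2 ^ ((Nat.pair n k) ^ 2)

def Dset (A : Set ℕ) : Set ℕ := insert 1 {m | ∃ n ∈ A, ∃ k, m = gExp n k}

def LfamA (A : Set ℕ) : Set (Set (List (Fin 2))) :=
  (fun m => ({List.replicate m (0 : Fin 2)} : Set (List (Fin 2)))) '' Dset A

def kword (n : ℕ) : List (Fin 2) := 0 :: (List.replicate (n + 1) 1 ++ [0])

def KfamA (A : Set ℕ) : Set (Set (List (Fin 2))) :=
  (fun n => ({kword n} : Set (List (Fin 2)))) '' A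

lemma Dset_mono {A B : Set ℕ} (h : A ⊆ B) : Dset A ⊆ Dset B := by
  intro d hd
  simp only [Dset, Set.mem_insert_iff, Set.mem_setOf_eq] at hd ⊢
  rcases hd with rfl | ⟨n, hn, k, rfl⟩
  · exact Or.inl rfl
  · exact Or.inr ⟨n, h hn, k, rfl⟩

lemma gExp_mem_Dset {A : Set ℕ} {n : ℕ} (hn : n ∈ A) (i : ℕ) : gExp n i ∈ Dset A :=
  Set.mem_insert_iff.2 (Or.inr ⟨n, hn, i, rfl⟩)

lemma one_mem_Dset (A : Set ℕ) : (1 : ℕ) ∈ Dset A := Set.mem_insert _ _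

lemma mem_langSSFs_LfamA {A : Set ℕ} {m : ℕ} (hm : m ∈ Dset A) :
    OfLang {List.replicate m (0 : Fin 2)} ∈ langSSFs (LfamA A) :=
  ⟨{List.replicate m (0 : Fin 2)}, ⟨m, hm, rfl⟩, rfl⟩

lemma mem_langSSFs_KfamA {A : Set ℕ} {n : ℕ} (hn : n ∈ A) :
    OfLang {kword n} ∈ langSSFs (KfamA A) :=
  ⟨{kword n}, ⟨n, hn, rfl⟩, rfl⟩

/-! ### Numeric lemma -/

lemma numeric {B : Set ℕ} {n : ℕ} (hn : n ∉ B) (i : ℕ) (ds : List ℕ)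
    (hsum : ds.sum = gExp n i) (hmem : ∀ d ∈ ds, d ∈ Dset B) : 2 ^ i ≤ ds.length := by
  rcases Nat.eq_zero_or_pos i with rfl | hi
  · rcases ds with _ | ⟨d, ds⟩
    · exfalso
      have : (0 : ℕ) < gExp n 0 := pow_pos (by norm_num) _
      simp at hsum
      omega
    · simp
  · set J := Nat.pair n i with hJ
    have hJi : i ≤ J := Nat.right_le_pair n i
    have hJ1 : 1 ≤ J := le_trans hi hJi
    have hiE : i ≤ J ^ 2 := le_trans hJi (by nlinarith)
    have hgE : gExp n i = 2 ^ (J ^ 2) := rfl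
    have hbound : ∀ d ∈ ds, d ≤ 2 ^ (J ^ 2 - i) := by
      intro d hd
      have hdsum : d ≤ 2 ^ (J ^ 2) := by
        rw [← hgE, ← hsum]
        exact List.single_le_sum (fun x _ => Nat.zero_le x) d hd
      have hdm := hmem d hd
      simp only [Dset, Set.mem_insert_iff, Set.mem_setOf_eq] at hdm
      rcases hdm with rfl | ⟨m, hmB, k, rfl⟩
      · exact Nat.one_le_two_pow
      · set j' := Nat.pair m k with hj'
        have hd2 : gExp m k = 2 ^ (j' ^ 2) := rfl
        rw [hd2] at hdsum ⊢
        have hle : j' ^ 2 ≤ J ^ 2 :=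
          (Nat.pow_le_pow_iff_right (by norm_num : 1 < 2)).1 hdsum
        have hj'J : j' ≤ J := (Nat.pow_le_pow_iff_left (by norm_num : 2 ≠ 0)).1 hle
        have hne : j' ≠ J := by
          intro h
          have h2 : Nat.pair m k = Nat.pair n i := by rw [← hj', h, hJ]
          exact hn ((Nat.pair_eq_pair.1 h2).1 ▸ hmB)
        have hj'J1 : j' + 1 ≤ J := by omega
        have hexp : j' ^ 2 + i ≤ J ^ 2 := by nlinarith
        exact Nat.pow_le_pow_right (by norm_num) (by omega)
    have hsum' : 2 ^ (J ^ 2) ≤ ds.length * 2 ^ (J ^ 2 - i) := by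
      have := List.sum_le_card_nsmul ds _ hbound
      rw [hsum, hgE] at this
      simpa [smul_eq_mul] using this
    have hmul : 2 ^ (J ^ 2 - i) * 2 ^ i = 2 ^ (J ^ 2) := by
      rw [← pow_add]
      congr 1
      omega
    have hpos : 0 < 2 ^ (J ^ 2 - i) := pow_pos (by norm_num) _
    have : 2 ^ (J ^ 2 - i) * 2 ^ i ≤ 2 ^ (J ^ 2 - i) * ds.length := by
      rw [hmul]
      exact le_trans hsum' (le_of_eq (mul_comm _ _))
    exact Nat.le_of_mul_le_mul_left this hpos

/-! ### K-family counting -/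

lemma kword_count (m : ℕ) : (kword m).count (0 : Fin 2) = 2 := by
  simp [kword, List.count_cons, List.count_append, List.count_replicate]

lemma kword_len (m : ℕ) : (kword m).length = m + 3 := by
  simp [kword]

lemma kfact {B : Set ℕ} {n : ℕ} (hn : n ∉ B) (ps : List (List (Fin 2)))
    (hmem : ∀ u ∈ ps, ∃ m ∈ B, u = kword m) (hfl : ps.flatten = kword n) : False := by
  have hc : (ps.flatten).count (0 : Fin 2) = 2 := by rw [hfl, kword_count]
  rw [List.count_flatten] at hc
  have hall : ∀ x ∈ ps.map (List.count (0 : Fin 2)), x = 2 := by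
    intro x hx
    obtain ⟨u, hu, rfl⟩ := List.mem_map.1 hx
    obtain ⟨m, _, rfl⟩ := hmem u hu
    exact kword_count m
  rw [List.sum_eq_card_nsmul _ 2 hall] at hc
  simp only [List.length_map, smul_eq_mul] at hc
  have hlen : ps.length = 1 := by omega
  obtain ⟨u, rfl⟩ := List.length_eq_one_iff.1 hlen
  obtain ⟨m, hmB, rfl⟩ := hmem u (by simp)
  have hl : (kword m).length = (kword n).length := by
    rw [← hfl]
    simp
  rw [kword_len, kword_len] at hl
  have : m = n := by omega
  exact hn (this ▸ hmB)

/-! ### Distinguishing formulas and lower bounds -/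

noncomputable def phiL {A : Set ℕ} {n : ℕ} (hn : n ∈ A) (i : ℕ) :
    MLFormula (langSSFs (LfamA A)) :=
  .box ⟨OfLang {List.replicate (gExp n i) (0 : Fin 2)},
    mem_langSSFs_LfamA (gExp_mem_Dset hn i)⟩ (.var 0)

lemma phiL_size {A : Set ℕ} {n : ℕ} (hn : n ∈ A) (i : ℕ) : (phiL hn i).size = 2 := rfl

lemma L_lower {A B : Set ℕ} {n : ℕ} (hnA : n ∈ A) (hnB : n ∉ B) (i : ℕ)
    (ψ : MLFormula (langSSFs (LfamA B))) (heq : FEquiv (phiL hnA i) ψ) :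
    2 ^ i ≤ ψ.size := by
  set wd := List.replicate (gExp n i) (0 : Fin 2) with hwd
  have hs := sat_boxW wd (mem_langSSFs_LfamA (gExp_mem_Dset hnA i))
  have h1 : Satisfies (pathModel wd {wd.length}) (0 : ℕ) ψ := (heq _ _).1 hs.1
  have h2 : ¬ Satisfies (pathModel wd ∅) (0 : ℕ) ψ := fun h => hs.2 ((heq _ _).2 h)
  obtain ⟨ps, hmem, hfl, hlen⟩ := key_lower
    {u | ∃ m ∈ Dset B, u = List.replicate m (0 : Fin 2)}
    (by
      rintro O ⟨L, ⟨m, hm, rfl⟩, rfl⟩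
      exact ⟨List.replicate m (0 : Fin 2), ⟨m, hm, rfl⟩, rfl⟩)
    wd ψ h1 h2
  have hds : ∀ d ∈ ps.map List.length, d ∈ Dset B := by
    intro d hd
    obtain ⟨u, hu, rfl⟩ := List.mem_map.1 hd
    obtain ⟨m, hm, rfl⟩ := hmem u hu
    simpa using hm
  have hsum : (ps.map List.length).sum = gExp n i := by
    rw [← List.length_flatten, hfl, hwd]
    simp
  have hnum := numeric hnB i _ hsum hds
  simp only [List.length_map] at hnum
  omega

noncomputable def phiK {A : Set ℕ} {n : ℕ} (hn : n ∈ A) :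
    MLFormula (langSSFs (KfamA A)) :=
  .box ⟨OfLang {kword n}, mem_langSSFs_KfamA hn⟩ (.var 0)

lemma K_lower {A B : Set ℕ} {n : ℕ} (hnA : n ∈ A) (hnB : n ∉ B)
    (ψ : MLFormula (langSSFs (KfamA B))) (heq : FEquiv (phiK hnA) ψ) : False := by
  have hs := sat_boxW (kword n) (mem_langSSFs_KfamA hnA)
  have h1 : Satisfies (pathModel (kword n) {(kword n).length}) (0 : ℕ) ψ := (heq _ _).1 hs.1
  have h2 : ¬ Satisfies (pathModel (kword n) ∅) (0 : ℕ) ψ := fun h => hs.2 ((heq _ _).2 h)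
  obtain ⟨ps, hmem, hfl, -⟩ := key_lower {u | ∃ m ∈ B, u = kword m}
    (by
      rintro O ⟨L, ⟨m, hm, rfl⟩, rfl⟩
      exact ⟨kword m, ⟨m, hm, rfl⟩, rfl⟩)
    (kword n) ψ h1 h2
  exact kfact hnB ps hmem hfl

/-! ### Equal expressiveness of the L-family logics -/

lemma leExpr_L (A B : Set ℕ) : LeExpr (langSSFs (LfamA A)) (langSSFs (LfamA B)) := by
  have h1 : OfLang {[(0 : Fin 2)]} ∈ langSSFs (LfamA B) := by
    have h : ([(0 : Fin 2)] : List (Fin 2)) = List.replicate 1 0 := rfl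
    rw [h]
    exact mem_langSSFs_LfamA (one_mem_Dset B)
  intro φ
  induction φ with
  | var p => exact ⟨.var p, fun M w => Iff.rfl⟩
  | neg φ ih =>
    obtain ⟨ψ, hψ⟩ := ih
    exact ⟨.neg ψ, fun M w => by simp only [Satisfies]; rw [hψ M w]⟩
  | or φ₁ φ₂ ih₁ ih₂ =>
    obtain ⟨ψ₁, hψ₁⟩ := ih₁
    obtain ⟨ψ₂, hψ₂⟩ := ih₂
    exact ⟨.or ψ₁ ψ₂, fun M w => by simp only [Satisfies]; rw [hψ₁ M w, hψ₂ M w]⟩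
  | box O φ ih =>
    obtain ⟨ψ, hψ⟩ := ih
    obtain ⟨L, ⟨m, hm, rfl⟩, hOL⟩ := O.2
    refine ⟨nest h1 m ψ, fun M w => ?_⟩
    rw [nest_sat]
    show (∀ w' ∈ O.1 M w, Satisfies M w' φ) ↔ _
    rw [← hOL]
    constructor
    · intro H w' hw'
      exact (hψ M w').1 (H w' ⟨List.replicate m 0, rfl, hw'⟩)
    · rintro H w' ⟨s, hs, hss⟩
      rw [Set.mem_singleton_iff] at hs
      subst hs
      exact (hψ M w').2 (H w' hss)


/-- the succinctness- and expressiveness relationships between modal logics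
defined by sets of languages over the alphabet {1,2} can be as complex as any countable
partial order. -/
theorem statement1 (S : Type) [Countable S] [PartialOrder S] :
    ∃ Lfam Kfam : S → Set (Set (List (Fin 2))),
      (∀ s t : S,
        (LeExpr (langSSFs (Kfam s)) (langSSFs (Kfam t)) ↔ s ≤ t) ∧
        (LePoly (langSSFs (Lfam s)) (langSSFs (Lfam t)) ↔ s ≤ t)) ∧
      (∀ s t : S, EquallyExpressive (langSSFs (Lfam s)) (langSSFs (Lfam t))) ∧
      (∀ s t : S, ¬ s ≤ t → ExpMoreSuccinct (langSSFs (Lfam s)) (langSSFs (Lfam t))) := by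
  obtain ⟨f, hf⟩ := exists_injective_nat S
  set A : S → Set ℕ := fun s => f '' {x | x ≤ s} with hA
  have hmono : ∀ {s t : S}, s ≤ t → A s ⊆ A t := by
    rintro s t hst _ ⟨x, hx, rfl⟩
    exact ⟨x, le_trans hx hst, rfl⟩
  have hfs : ∀ s : S, f s ∈ A s := fun s => ⟨s, le_refl s, rfl⟩
  have hnot : ∀ {s t : S}, ¬ s ≤ t → f s ∉ A t := by
    rintro s t hst ⟨x, hx, hfx⟩
    exact hst (hf hfx ▸ hx)
  refine ⟨fun s => LfamA (A s), fun s => KfamA (A s), fun s t => ⟨⟨?_, ?_⟩, ⟨?_, ?_⟩⟩, ?_, ?_⟩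
  · -- LeExpr K → s ≤ t
    intro hle
    by_contra hst
    obtain ⟨ψ, hψ⟩ := hle (phiK (hfs s))
    exact K_lower (hfs s) (hnot hst) ψ hψ
  · -- s ≤ t → LeExpr K
    intro hst
    exact leExpr_of_subset (Set.image_mono (Set.image_mono (hmono hst)))
  · -- LePoly L → s ≤ t
    rintro ⟨p, hp⟩
    by_contra hst
    set i := p.eval 2 with hi
    obtain ⟨ψ, hψ, hsize⟩ := hp (phiL (hfs s) i)
    have h2i := L_lower (hfs s) (hnot hst) i ψ hψ
    rw [phiL_size] at hsize
    have := Nat.lt_two_pow_self (n := i)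
    omega
  · -- s ≤ t → LePoly L
    intro hst
    exact lePoly_of_subset (Set.image_mono (Set.image_mono (Dset_mono (hmono hst))))
  · -- equally expressive
    intro s t
    exact ⟨leExpr_L _ _, leExpr_L _ _⟩
  · -- exponential succinctness
    intro s t hst
    refine ⟨fun i => phiL (hfs s) i, 0, 2, 2, one_lt_two, ?_, ?_⟩
    · intro i
      rw [phiL_size]
      omega
    · intro i ψ hψ
      have h := L_lower (hfs s) (hnot hst) i ψ hψ
      calc (2 : ℝ) ^ i = ((2 ^ i : ℕ) : ℝ) := by push_cast; ring
        _ ≤ ((ψ.size : ℕ) : ℝ) := by exact_mod_cast h
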